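/- For an odd integer n > 2, the circulant matrix M_n = circ(m₀,...,m_{n−1}) with m_j = (1/√n)·e^{(2πi/n)·j²} is unitary. -/
import Mathlib


open Complex Real Matrix

/-- The circulant (shift) matrix whose `(i,j)` entry is `a (j - i)`. -/
def circ {n : ℕ} (a : ZMod n → ℂ) : Matrix (ZMod n) (ZMod n) ℂ :=
  fun i j => a (j - i)

/-- The circulant Gauss matrix `M_n` with `m_j = (1/√n)·e^{(2πi/n)·j²}`. -/
noncomputable def gaussMatrix (n : ℕ) : Matrix (ZMod n) (ZMod n) ℂ :=
  circ (fun j => (1 / Real.sqrt n : ℂ) *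
    Complex.exp (2 * Real.pi * Complex.I * ((j.val : ℂ) ^ 2) / n))

lemma exp_eq_stdAddChar {n : ℕ} [NeZero n] (v : ZMod n) :
    Complex.exp (2 * Real.pi * Complex.I * ((v.val : ℂ) ^ 2) / n)
      = ZMod.stdAddChar (v ^ 2) := by
  have h := ZMod.stdAddChar_coe (N := n) ((v.val : ℤ) ^ 2)
  have h2 : (((v.val : ℤ) ^ 2 : ℤ) : ZMod n) = v ^ 2 := by
    push_cast
    simp [ZMod.natCast_val, ZMod.cast_id]
  rw [h2] at h
  rw [h]
  congr 1
  push_cast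
  ring

lemma conj_stdAddChar {n : ℕ} [NeZero n] (x : ZMod n) :
    (starRingEnd ℂ) (ZMod.stdAddChar x) = ZMod.stdAddChar (-x) := by
  rw [ZMod.stdAddChar_apply, ZMod.stdAddChar_apply, AddChar.map_neg_eq_inv,
    Circle.coe_inv_eq_conj]

lemma gaussMatrix_apply {n : ℕ} [NeZero n] (i j : ZMod n) :
    gaussMatrix n i j = (1 / Real.sqrt n : ℂ) * ZMod.stdAddChar ((j - i) ^ 2) := by
  rw [gaussMatrix, circ, exp_eq_stdAddChar]

theorem gaussMatrix_unitary (n : ℕ) [NeZero n] (hn : Odd n) (hn2 : 2 < n) :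
    gaussMatrix n * (gaussMatrix n)ᴴ = 1 ∧ (gaussMatrix n)ᴴ * gaussMatrix n = 1 := by
  have hnpos : (0 : ℝ) < n := by positivity
  have h2 : IsUnit (2 : ZMod n) := by
    have := (ZMod.isUnit_iff_coprime 2 n).mpr (Nat.coprime_two_left.mpr hn)
    simpa using this
  have hc : (1 / Real.sqrt n : ℂ) * (1 / Real.sqrt n : ℂ) = 1 / n := by
    rw [div_mul_div_comm, one_mul, ← Complex.ofReal_mul, Real.mul_self_sqrt hnpos.le]
    push_cast
    ring
  have key : gaussMatrix n * (gaussMatrix n)ᴴ = 1 := by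
    ext i j
    rw [Matrix.mul_apply, Matrix.one_apply]
    have step : ∀ k : ZMod n, gaussMatrix n i k * (gaussMatrix n)ᴴ k j
        = (1 / n : ℂ) * (ZMod.stdAddChar (-((j - i) * (i + j))) *
            ZMod.stdAddChar (k * (2 * (j - i)))) := by
      intro k
      rw [Matrix.conjTranspose_apply, gaussMatrix_apply, gaussMatrix_apply,
        Complex.star_def, _root_.map_mul, conj_stdAddChar]
      have hnum : (starRingEnd ℂ) (1 / (Real.sqrt n : ℂ)) = 1 / (Real.sqrt n : ℂ) := by
        simp
      rw [hnum]
      rw [show (1 / Real.sqrt n : ℂ) * ZMod.stdAddChar ((k - i) ^ 2) *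
          ((1 / Real.sqrt n : ℂ) * ZMod.stdAddChar (-((k - j) ^ 2)))
        = ((1 / Real.sqrt n : ℂ) * (1 / Real.sqrt n : ℂ)) *
          (ZMod.stdAddChar ((k - i) ^ 2) * ZMod.stdAddChar (-((k - j) ^ 2))) by ring,
        hc, ← AddChar.map_add_eq_mul, ← AddChar.map_add_eq_mul]
      congr 2
      ring
    rw [Finset.sum_congr rfl (fun k _ => step k), ← Finset.mul_sum]
    have hsum : ∑ k : ZMod n, ZMod.stdAddChar (-((j - i) * (i + j))) *
        ZMod.stdAddChar (k * (2 * (j - i)))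
        = ZMod.stdAddChar (-((j - i) * (i + j))) *
          ∑ k : ZMod n, ZMod.stdAddChar (k * (2 * (j - i))) := by
      rw [Finset.mul_sum]
    rw [hsum, AddChar.sum_mulShift _ (ZMod.isPrimitive_stdAddChar n)]
    by_cases hij : i = j
    · subst hij
      rw [if_pos (show (2 : ZMod n) * (i - i) = 0 by simp), if_pos rfl]
      simp only [sub_self, zero_mul, neg_zero, AddChar.map_zero_eq_one, one_mul, ZMod.card]
      have hn0 : (n : ℂ) ≠ 0 := by
        exact_mod_cast Nat.cast_ne_zero.mpr (NeZero.ne n)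
      field_simp
    · have hne : 2 * (j - i) ≠ 0 := by
        intro h
        apply hij
        have := h2.mul_right_eq_zero.mp h
        have : j - i = 0 := this
        linear_combination -this
      rw [if_neg hne, if_neg (fun h => hij h)]
      ring
  exact ⟨key, mul_eq_one_comm.mp key⟩
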